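/- arXiv:1901.08186 — 2 statements merged into one kernel-verified Lean document; each statement's English description precedes it below -/
import Mathlib

section
/- Let K be an invertible self-dual ℓ×ℓ matrix over F_2 and fix i with 1 ≤ i ≤ ℓ. If an erasure pattern e is uncorrectable for bit-channel i, then its complement ē (the vector with supp(ē) = {1,…,ℓ} \ supp(e)) is correctable (i.e., not uncorrectable) for bit-channel ℓ+1-i. -/
/-- The support of a vector over `ZMod 2`. -/
def supp {ℓ : ℕ} (v : Fin ℓ → ZMod 2) : Set (Fin ℓ) := {j | v j ≠ 0}

/-- The Hamming weight of a vector over `ZMod 2`. -/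
def wt {ℓ : ℕ} (v : Fin ℓ → ZMod 2) : ℕ :=
  (Finset.univ.filter fun j => v j ≠ 0).card

/-- The kernel code `C_i`: the span of the rows `g_{i+1}, …, g_ℓ` of `K`
(rows of index `≥ i` in 0-based indexing). -/
def kernelCode {ℓ : ℕ} (K : Matrix (Fin ℓ) (Fin ℓ) (ZMod 2)) (i : ℕ) :
    Submodule (ZMod 2) (Fin ℓ → ZMod 2) :=
  Submodule.span (ZMod 2) {v | ∃ r : Fin ℓ, i ≤ (r : ℕ) ∧ v = K r}

/-- `e` is an uncorrectable erasure pattern for the bit-channel of (0-based) index `i`. -/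
def Uncorrectable {ℓ : ℕ} (K : Matrix (Fin ℓ) (Fin ℓ) (ZMod 2)) (i : Fin ℓ)
    (e : Fin ℓ → ZMod 2) : Prop :=
  ∃ u' u'' : Fin ℓ → ZMod 2,
    (∀ j, j < i → u' j = u'' j) ∧ u' i ≠ u'' i ∧
      ∀ j, e j = 0 → Matrix.vecMul u' K j = Matrix.vecMul u'' K j

/-- `E_{i,w}`: the number of uncorrectable erasure patterns of weight `w`
for bit-channel `i`. -/
noncomputable def Ecount {ℓ : ℕ} (K : Matrix (Fin ℓ) (Fin ℓ) (ZMod 2)) (i : Fin ℓ)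
    (w : ℕ) : ℕ :=
  Nat.card {e : Fin ℓ → ZMod 2 // Uncorrectable K i e ∧ wt e = w}

/-- `f_i(z) = ∑_{w=0}^{ℓ} E_{i,w} z^w (1-z)^{ℓ-w}`. -/
noncomputable def fpoly {ℓ : ℕ} (K : Matrix (Fin ℓ) (Fin ℓ) (ZMod 2)) (i : Fin ℓ)
    (z : ℝ) : ℝ :=
  ∑ w ∈ Finset.range (ℓ + 1), (Ecount K i w : ℝ) * z ^ w * (1 - z) ^ (ℓ - w)

/-- Dual code with respect to the standard bilinear form `⟨u,v⟩ = ∑ j, u j * v j`. -/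
def dualCode {ℓ : ℕ} (C : Submodule (ZMod 2) (Fin ℓ → ZMod 2)) :
    Submodule (ZMod 2) (Fin ℓ → ZMod 2) where
  carrier := {v | ∀ c ∈ C, ∑ j, v j * c j = 0}
  add_mem' := by
    intro a b ha hb c hc
    simpa [add_mul, Finset.sum_add_distrib] using by rw [ha c hc, hb c hc]; simp
  zero_mem' := by intro c hc; simp
  smul_mem' := by
    intro r a ha c hc
    simp only [Pi.smul_apply, smul_eq_mul, mul_assoc, ← Finset.mul_sum, Set.mem_setOf_eq]
    rw [ha c hc, mul_zero]

/-- `K` is self-dual if `C_i = C_{ℓ-i}^⊥` for all `0 ≤ i ≤ ℓ`. -/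
def SelfDual {ℓ : ℕ} (K : Matrix (Fin ℓ) (Fin ℓ) (ZMod 2)) : Prop :=
  ∀ i ≤ ℓ, kernelCode K i = dualCode (kernelCode K (ℓ - i))


lemma zmod2_ne_zero : ∀ a : ZMod 2, a ≠ 0 → a = 1 := by decide

lemma mem_dualCode {ℓ : ℕ} {C : Submodule (ZMod 2) (Fin ℓ → ZMod 2)}
    {v : Fin ℓ → ZMod 2} (h : v ∈ dualCode C) :
    ∀ c ∈ C, ∑ j, v j * c j = 0 := h

lemma pair_zero {ℓ : ℕ} (K : Matrix (Fin ℓ) (Fin ℓ) (ZMod 2))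
    (hsd : SelfDual K) {r s : Fin ℓ} (h : ℓ ≤ (r : ℕ) + s) :
    ∑ j, K r j * K s j = 0 := by
  have hs : (s : ℕ) < ℓ := s.isLt
  have h1 := hsd (ℓ - s) (Nat.sub_le _ _)
  rw [Nat.sub_sub_self hs.le] at h1
  have hKr : K r ∈ kernelCode K (ℓ - s) :=
    Submodule.subset_span ⟨r, by omega, rfl⟩
  rw [h1] at hKr
  exact mem_dualCode hKr (K s) (Submodule.subset_span ⟨s, le_rfl, rfl⟩)

lemma pair_one {ℓ : ℕ} (K : Matrix (Fin ℓ) (Fin ℓ) (ZMod 2)) (hK : IsUnit K.det)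
    (hsd : SelfDual K) (r : Fin ℓ) :
    ∑ j, K r j * K r.rev j ≠ 0 := by
  set B : Matrix (Fin ℓ) (Fin ℓ) (ZMod 2) :=
    (K * K.transpose).submatrix id ⇑(Fin.revPerm) with hB
  have hBapp : ∀ a b : Fin ℓ, B a b = ∑ j, K a j * K b.rev j := by
    intro a b
    simp [hB, Matrix.mul_apply, Matrix.submatrix_apply, Matrix.transpose_apply]
  have htri : B.BlockTriangular id := by
    intro a b hab
    rw [hBapp]
    apply pair_zero K hsd
    have h1 : (b : ℕ) < a := hab
    have h2 : ((Fin.rev b : Fin ℓ) : ℕ) = ℓ - (b + 1) := Fin.val_rev b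
    have := a.isLt
    omega
  have hdet : IsUnit B.det := by
    rw [hB, Matrix.det_permute']
    have : IsUnit (K * K.transpose).det := by
      rw [Matrix.det_mul, Matrix.det_transpose]
      exact hK.mul hK
    rcases Int.units_eq_one_or (Equiv.Perm.sign (Fin.revPerm : Equiv.Perm (Fin ℓ))) with h | h <;>
      simp [h, this, isUnit_iff_ne_zero] at this ⊢ <;> simpa using this
  rw [Matrix.det_of_upperTriangular htri] at hdet
  have := (isUnit_iff_ne_zero.mp hdet)
  rw [Finset.prod_ne_zero_iff] at this
  have h := this r (Finset.mem_univ r)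
  rwa [hBapp] at h

/-- For a self-dual kernel, the complement of an erasure pattern uncorrectable
for bit-channel `i` is correctable for bit-channel `ℓ+1-i`. -/
theorem complement_correctable {ℓ : ℕ} (hℓ : 0 < ℓ)
    (K : Matrix (Fin ℓ) (Fin ℓ) (ZMod 2)) (hK : IsUnit K.det)
    (hsd : SelfDual K) (i : Fin ℓ) (e : Fin ℓ → ZMod 2)
    (he : Uncorrectable K i e) :
    ¬ Uncorrectable K i.rev (fun j => e j + 1) := by
  rintro ⟨v', v'', hv1, hv2, hv3⟩
  obtain ⟨u', u'', hu1, hu2, hu3⟩ := he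
  set d : Fin ℓ → ZMod 2 := u' - u'' with hd
  set d' : Fin ℓ → ZMod 2 := v' - v'' with hd'
  have hdlow : ∀ r : Fin ℓ, r < i → d r = 0 := fun r hr => by
    simp [hd, sub_eq_zero, hu1 r hr]
  have hdi : d i = 1 := zmod2_ne_zero _ (by simp [hd, sub_eq_zero]; exact hu2)
  have hd'low : ∀ r : Fin ℓ, r < i.rev → d' r = 0 := fun r hr => by
    simp [hd', sub_eq_zero, hv1 r hr]
  have hd'i : d' i.rev = 1 := zmod2_ne_zero _ (by simp [hd', sub_eq_zero]; exact hv2)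
  have hc : ∀ j, e j = 0 → Matrix.vecMul d K j = 0 := fun j hj => by
    rw [hd, Matrix.sub_vecMul]
    simp [hu3 j hj]
  have hc' : ∀ j, e j ≠ 0 → Matrix.vecMul d' K j = 0 := fun j hj => by
    rw [hd', Matrix.sub_vecMul]
    have : e j + 1 = 0 := by rw [zmod2_ne_zero _ hj]; decide
    simp [hv3 j this]
  have hzero : ∑ j, Matrix.vecMul d K j * Matrix.vecMul d' K j = 0 := by
    apply Finset.sum_eq_zero
    intro j _
    by_cases hj : e j = 0
    · rw [hc j hj, zero_mul]
    · rw [hc' j hj, mul_zero]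
  have hexp : ∑ j, Matrix.vecMul d K j * Matrix.vecMul d' K j
      = ∑ r, ∑ s, d r * d' s * ∑ j, K r j * K s j := by
    simp only [Matrix.vecMul, dotProduct]
    simp_rw [Finset.sum_mul_sum]
    rw [Finset.sum_comm]
    refine Finset.sum_congr rfl fun r _ => ?_
    rw [Finset.sum_comm]
    refine Finset.sum_congr rfl fun s _ => ?_
    rw [Finset.mul_sum]
    exact Finset.sum_congr rfl fun j _ => by ring
  have key : ∀ r s : Fin ℓ, d r * d' s * (∑ j, K r j * K s j) = 0 ∨ (r = i ∧ s = i.rev) := by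
    intro r s
    by_cases hr : d r = 0
    · left; rw [hr]; ring
    by_cases hs : d' s = 0
    · left; rw [hs]; ring
    have hri : (i : ℕ) ≤ r := by
      by_contra h
      exact hr (hdlow r (Fin.lt_def.mpr (by omega)))
    have hsi : ((i.rev : Fin ℓ) : ℕ) ≤ s := by
      by_contra h
      exact hs (hd'low s (Fin.lt_def.mpr (by omega)))
    by_cases heq : r = i ∧ s = i.rev
    · right; exact heq
    left
    have hrev : ((i.rev : Fin ℓ) : ℕ) = ℓ - (i + 1) := Fin.val_rev i
    have hne : ¬((r : ℕ) = i ∧ (s : ℕ) = ℓ - (i + 1)) := by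
      intro ⟨h1, h2⟩
      exact heq ⟨Fin.ext h1, Fin.ext (by rw [h2, hrev])⟩
    have hls : ℓ ≤ (r : ℕ) + s := by
      have := r.isLt; have := s.isLt; have := i.isLt
      omega
    rw [pair_zero K hsd hls, mul_zero]
  have hmain : ∑ r, ∑ s, d r * d' s * ∑ j, K r j * K s j
      = d i * d' i.rev * ∑ j, K i j * K i.rev j := by
    rw [Finset.sum_eq_single i]
    · rw [Finset.sum_eq_single i.rev]
      · intro s _ hs
        rcases key i s with h | ⟨_, h2⟩
        · exact h
        · exact absurd h2 hs
      · intro h; exact absurd (Finset.mem_univ _) h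
    · intro r _ hr
      apply Finset.sum_eq_zero
      intro s _
      rcases key r s with h | ⟨h1, _⟩
      · exact h
      · exact absurd h1 hr
    · intro h; exact absurd (Finset.mem_univ _) h
  rw [hexp, hmain, hdi, hd'i, one_mul, one_mul] at hzero
  exact pair_one K hK hsd i hzero
end

section
/- Let K be an invertible ℓ×ℓ matrix over F_2 and fix i with 1 ≤ i ≤ ℓ. Let d_i be the minimum Hamming weight of a vector in C_{i-1} \ C_i (equivalently, the Hamming distance from g_i to C_i, the i-th partial distance of K). Then E_{i,w} = 0 for all w < d_i, and E_{i,d_i} equals the number of vectors of weight d_i in C_{i-1} \ C_i; in particular E_{i,d_i} > 0, so the minimum weight of an erasure pattern uncorrectable for bit-channel i equals d_i. -/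
section Aux
open Matrix Finset

variable {ℓ : ℕ}

lemma zmod2_eq_one {x : ZMod 2} (h : x ≠ 0) : x = 1 := by revert x; decide

lemma wt_le_of_cover {c e : Fin ℓ → ZMod 2} (h : ∀ j, e j = 0 → c j = 0) :
    wt c ≤ wt e := by
  apply Finset.card_le_card
  intro j hj
  simp only [Finset.mem_filter, Finset.mem_univ, true_and] at *
  exact fun he => hj (h j he)

lemma eq_of_cover_of_wt_eq {c e : Fin ℓ → ZMod 2} (h : ∀ j, e j = 0 → c j = 0)
    (hw : wt c = wt e) : e = c := by
  have hsub : (Finset.univ.filter fun j => c j ≠ 0) ⊆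
      (Finset.univ.filter fun j => e j ≠ 0) := by
    intro j hj
    simp only [Finset.mem_filter, Finset.mem_univ, true_and] at *
    exact fun he => hj (h j he)
  have hEq := Finset.eq_of_subset_of_card_le hsub (le_of_eq hw.symm)
  funext j
  by_cases hc : c j = 0
  · by_cases he : e j = 0
    · rw [hc, he]
    · exfalso
      have : j ∈ (Finset.univ.filter fun j => e j ≠ 0) := by simp [he]
      rw [← hEq] at this
      simp only [Finset.mem_filter, Finset.mem_univ, true_and] at this
      exact this hc
  · have : j ∈ (Finset.univ.filter fun j => e j ≠ 0) := hEq ▸ (by simp [hc])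
    simp only [Finset.mem_filter, Finset.mem_univ, true_and] at this
    rw [zmod2_eq_one hc, zmod2_eq_one this]

lemma mem_kernelCode_iff (K : Matrix (Fin ℓ) (Fin ℓ) (ZMod 2)) (hK : IsUnit K.det)
    (m : ℕ) (c : Fin ℓ → ZMod 2) :
    c ∈ kernelCode K m ↔ ∀ r : Fin ℓ, (r : ℕ) < m → Matrix.vecMul c K⁻¹ r = 0 := by
  constructor
  · intro hc
    induction hc using Submodule.span_induction with
    | mem v hv =>
      obtain ⟨r0, hr0, rfl⟩ := hv
      intro r hr
      have : Matrix.vecMul (K r0) K⁻¹ r = (K * K⁻¹) r0 r := by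
        simp [Matrix.vecMul, Matrix.mul_apply, dotProduct]
      have hne : r0 ≠ r := fun h => by subst h; omega
      rw [this, Matrix.mul_nonsing_inv K hK, Matrix.one_apply_ne hne]
    | zero => intro r hr; simp
    | add a b _ _ ha hb =>
      intro r hr
      rw [Matrix.add_vecMul, Pi.add_apply, ha r hr, hb r hr, add_zero]
    | smul t a _ ha =>
      intro r hr
      rw [Matrix.smul_vecMul, Pi.smul_apply, ha r hr, smul_zero]
  · intro h
    have hc : Matrix.vecMul (Matrix.vecMul c K⁻¹) K = c := by
      rw [Matrix.vecMul_vecMul, Matrix.nonsing_inv_mul K hK, Matrix.vecMul_one]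
    have hsum : Matrix.vecMul (Matrix.vecMul c K⁻¹) K
        = ∑ r, Matrix.vecMul c K⁻¹ r • K r := by
      funext j
      simp [Matrix.vecMul, dotProduct, Finset.sum_apply]
    rw [← hc, hsum]
    apply Submodule.sum_mem
    intro r _
    by_cases hr : (r : ℕ) < m
    · rw [h r hr, zero_smul]; exact Submodule.zero_mem _
    · exact Submodule.smul_mem _ _ (Submodule.subset_span ⟨r, by omega, rfl⟩)

lemma uncorrectable_iff (K : Matrix (Fin ℓ) (Fin ℓ) (ZMod 2)) (hK : IsUnit K.det)
    (i : Fin ℓ) (e : Fin ℓ → ZMod 2) :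
    Uncorrectable K i e ↔ ∃ c, c ∈ kernelCode K (i : ℕ) ∧
      c ∉ kernelCode K ((i : ℕ) + 1) ∧ ∀ j, e j = 0 → c j = 0 := by
  constructor
  · rintro ⟨u', u'', h1, h2, h3⟩
    refine ⟨Matrix.vecMul (u' - u'') K, ?_, ?_, ?_⟩
    · rw [mem_kernelCode_iff K hK]
      intro r hr
      rw [Matrix.vecMul_vecMul, Matrix.mul_nonsing_inv K hK, Matrix.vecMul_one]
      have : u' r = u'' r := h1 r (Fin.lt_def.mpr hr)
      simp [Pi.sub_apply, this]
    · rw [mem_kernelCode_iff K hK]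
      push_neg
      refine ⟨i, by omega, ?_⟩
      rw [Matrix.vecMul_vecMul, Matrix.mul_nonsing_inv K hK, Matrix.vecMul_one]
      simpa [Pi.sub_apply, sub_eq_zero] using h2
    · intro j hj
      rw [Matrix.sub_vecMul, Pi.sub_apply, h3 j hj, sub_self]
  · rintro ⟨c, hc1, hc2, hc3⟩
    refine ⟨Matrix.vecMul c K⁻¹, 0, ?_, ?_, ?_⟩
    · intro j hj
      rw [(mem_kernelCode_iff K hK _ c).mp hc1 j (Fin.lt_def.mp hj)]
      rfl
    · intro h
      apply hc2
      rw [mem_kernelCode_iff K hK]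
      intro r hr
      rcases Nat.lt_or_ge (r : ℕ) (i : ℕ) with h' | h'
      · exact (mem_kernelCode_iff K hK _ c).mp hc1 r h'
      · have : r = i := Fin.ext (by omega)
        rw [this, h]; rfl
    · intro j hj
      have hc : Matrix.vecMul (Matrix.vecMul c K⁻¹) K = c := by
        rw [Matrix.vecMul_vecMul, Matrix.nonsing_inv_mul K hK, Matrix.vecMul_one]
      rw [hc, hc3 j hj, Matrix.zero_vecMul]
      rfl

end Aux

/-- The minimum weight of an uncorrectable erasure pattern for bit-channel `i`
equals the `i`-th partial distance `d_i`, `E_{i,w} = 0` for `w < d_i`, and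
`E_{i,d_i}` is the number of minimum-weight vectors of `C_{i-1} \ C_i`. -/
theorem min_weight_uncorrectable {ℓ : ℕ} (hℓ : 0 < ℓ)
    (K : Matrix (Fin ℓ) (Fin ℓ) (ZMod 2)) (hK : IsUnit K.det)
    (i : Fin ℓ) (d : ℕ)
    (hd : IsLeast {w | ∃ c, c ∈ kernelCode K (i : ℕ) ∧
      c ∉ kernelCode K ((i : ℕ) + 1) ∧ wt c = w} d) :
    (∀ w, w < d → Ecount K i w = 0) ∧
    Ecount K i d = Nat.card {c : Fin ℓ → ZMod 2 // c ∈ kernelCode K (i : ℕ) ∧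
      c ∉ kernelCode K ((i : ℕ) + 1) ∧ wt c = d} ∧
    0 < Ecount K i d ∧
    IsLeast {w | ∃ e, Uncorrectable K i e ∧ wt e = w} d := by
  have key : ∀ e, Uncorrectable K i e ∧ wt e = d ↔
      (e ∈ kernelCode K (i : ℕ) ∧ e ∉ kernelCode K ((i : ℕ) + 1) ∧ wt e = d) := by
    intro e
    constructor
    · rintro ⟨hU, hw⟩
      obtain ⟨c, hc1, hc2, hc3⟩ := (uncorrectable_iff K hK i e).mp hU
      have hdc : d ≤ wt c := hd.2 ⟨c, hc1, hc2, rfl⟩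
      have hce : wt c ≤ wt e := wt_le_of_cover hc3
      have : e = c := eq_of_cover_of_wt_eq hc3 (by omega)
      subst this
      exact ⟨hc1, hc2, hw⟩
    · rintro ⟨h1, h2, h3⟩
      exact ⟨(uncorrectable_iff K hK i e).mpr ⟨e, h1, h2, fun j hj => hj⟩, h3⟩
  have lb : ∀ w, (∃ e, Uncorrectable K i e ∧ wt e = w) → d ≤ w := by
    rintro w ⟨e, hU, rfl⟩
    obtain ⟨c, hc1, hc2, hc3⟩ := (uncorrectable_iff K hK i e).mp hU
    exact le_trans (hd.2 ⟨c, hc1, hc2, rfl⟩) (wt_le_of_cover hc3)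
  obtain ⟨c0, hc01, hc02, hc03⟩ := hd.1
  refine ⟨?_, ?_, ?_, ?_, lb⟩
  · intro w hw
    have : IsEmpty {e : Fin ℓ → ZMod 2 // Uncorrectable K i e ∧ wt e = w} := by
      constructor
      rintro ⟨e, hU, hwe⟩
      exact absurd (lb w ⟨e, hU, hwe⟩) (by omega)
    exact Nat.card_of_isEmpty
  · unfold Ecount
    exact Nat.card_congr (Equiv.subtypeEquivRight key)
  · rw [Ecount]
    have : Nonempty {e : Fin ℓ → ZMod 2 // Uncorrectable K i e ∧ wt e = d} :=
      ⟨⟨c0, (key c0).mpr ⟨hc01, hc02, hc03⟩⟩⟩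
    exact Nat.card_pos
  · exact ⟨c0, ((key c0).mpr ⟨hc01, hc02, hc03⟩ : _)⟩
end
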